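/- For every δ > 0 there exists T₀ > 0 such that for all (t,x,τ,ξ) ∈ ℝ × ℝⁿ × ℝ × ℝⁿ satisfying |t| ≥ T₀, |τ² + q₀(x,ξ) − 2| ≤ δ/2, and either |τ² − 1| ≥ δ or |q₀(x,ξ) − 1| ≥ δ, one has |τ² − q₀(x,ξ) + q(t,x,τ,ξ)| ≥ δ. -/

import Mathlib

open Real

noncomputable section

/-- `ℝⁿ` as a Euclidean space. -/
abbrev En (n : ℕ) := EuclideanSpace ℝ (Fin n)

/-- The Japanese bracket `⟨t⟩ = (1+t²)^{1/2}`. -/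
def jap (t : ℝ) : ℝ := Real.sqrt (1 + t ^ 2)

/-- uniform ellipticity of the Klein–Gordon symbol in the Appendix: for every
`δ > 0` there is `T₀ > 0` such that if `|t| ≥ T₀`, `|τ² + q₀ − 2| ≤ δ/2`, and `|τ² − 1| ≥ δ` or
`|q₀ − 1| ≥ δ`, then `|τ² − q₀ + q| ≥ δ`. -/
theorem stmt5 (n : ℕ) (hn : 1 ≤ n) (μ C c₀ : ℝ) (hμ : 0 < μ) (hC : 0 < C) (hc₀ : 0 < c₀)
    (q₀ : En n → En n → ℝ) (q : ℝ → En n → ℝ → En n → ℝ)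
    (hq₀ell : ∀ x ξ, c₀ * ‖ξ‖ ^ 2 ≤ q₀ x ξ)
    (hq : ∀ t x τ ξ, |q t x τ ξ| ≤ C * jap t ^ (-1 - μ) * (τ ^ 2 + ‖ξ‖ ^ 2)) :
    ∀ δ > (0 : ℝ), ∃ T₀ > (0 : ℝ), ∀ (t : ℝ) (x : En n) (τ : ℝ) (ξ : En n),
      T₀ ≤ |t| → |τ ^ 2 + q₀ x ξ - 2| ≤ δ / 2 →
      (δ ≤ |τ ^ 2 - 1| ∨ δ ≤ |q₀ x ξ - 1|) →
      δ ≤ |τ ^ 2 - q₀ x ξ + q t x τ ξ| := by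
  intro δ hδ
  set M : ℝ := (2 + δ / 2) * (1 + 1 / c₀) with hM
  have hMpos : 0 < M := by positivity
  refine ⟨max 1 (2 * C * M / δ), lt_of_lt_of_le one_pos (le_max_left _ _), ?_⟩
  intro t x τ ξ ht hshell hcase
  have hs := abs_le.mp hshell
  have hq₀nonneg : 0 ≤ q₀ x ξ := le_trans (by positivity) (hq₀ell x ξ)
  have hτ2 : τ ^ 2 ≤ 2 + δ / 2 := by linarith
  have hξ2 : ‖ξ‖ ^ 2 ≤ (2 + δ / 2) / c₀ := by
    rw [le_div_iff₀ hc₀]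
    have h2 := hq₀ell x ξ
    nlinarith [sq_nonneg τ]
  have hsum : τ ^ 2 + ‖ξ‖ ^ 2 ≤ M := by
    have hdm : (2 + δ / 2) / c₀ = (2 + δ / 2) * (1 / c₀) := by ring
    rw [hdm] at hξ2
    rw [hM]; nlinarith
  have hjap1 : (1 : ℝ) ≤ jap t := by
    have h := Real.sqrt_le_sqrt (show (1 : ℝ) ≤ 1 + t ^ 2 by nlinarith [sq_nonneg t])
    rwa [Real.sqrt_one] at h
  have hjapt : |t| ≤ jap t := by
    rw [jap, ← Real.sqrt_sq_eq_abs]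
    exact Real.sqrt_le_sqrt (by nlinarith)
  have hT : 2 * C * M / δ ≤ jap t :=
    le_trans (le_max_right 1 (2 * C * M / δ)) (le_trans ht hjapt)
  have hjpos : (0 : ℝ) < jap t := lt_of_lt_of_le one_pos hjap1
  have hrp : jap t ^ (-1 - μ) ≤ (jap t)⁻¹ := by
    have h := Real.rpow_le_rpow_of_exponent_le hjap1 (show -1 - μ ≤ -1 by linarith)
    rwa [Real.rpow_neg_one] at h
  have hinv : (jap t)⁻¹ ≤ δ / (2 * C * M) := by
    have h2 := (div_le_iff₀ hδ).mp hT
    rw [← one_div, div_le_div_iff₀ hjpos (by positivity)]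
    nlinarith
  have hsum0 : 0 ≤ τ ^ 2 + ‖ξ‖ ^ 2 := by positivity
  have hqe : |q t x τ ξ| ≤ δ / 2 := by
    have h1 := hq t x τ ξ
    have h2 : C * jap t ^ (-1 - μ) * (τ ^ 2 + ‖ξ‖ ^ 2) ≤ C * (δ / (2 * C * M)) * M := by
      have hrp' : jap t ^ (-1 - μ) ≤ δ / (2 * C * M) := le_trans hrp hinv
      exact mul_le_mul (mul_le_mul_of_nonneg_left hrp' hC.le) hsum hsum0 (by positivity)
    have h3 : C * (δ / (2 * C * M)) * M = δ / 2 := by field_simp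
    linarith
  have hqb := abs_le.mp hqe
  rw [le_abs]
  rcases hcase with hA | hB
  · rcases le_abs.mp hA with h | h
    · left; linarith
    · right; linarith
  · rcases le_abs.mp hB with h | h
    · right; linarith
    · left; linarith
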